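/- For every n ≥ 2, tree-α(C(K̄_n)) = n − 1, where K̄_n is the edgeless graph on n vertices and C denotes the 1-completion (so C(K̄_n) is the complete graph K_n with every edge subdivided once). -/

import Mathlib

open SimpleGraph

structure TreeDecomp {V : Type} (G : SimpleGraph V) where
  ι : Type
  tree : SimpleGraph ι
  isTree : tree.IsTree
  bag : ι → Finset V
  covers_edge : ∀ ⦃u v : V⦄, G.Adj u v → ∃ t, u ∈ bag t ∧ v ∈ bag t
  support_connected : ∀ v : V, (tree.induce {t | v ∈ bag t}).Connected

noncomputable def indepNum {V : Type} (G : SimpleGraph V) (s : Set V) : ℕ :=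
  sSup {n | ∃ t : Finset V, ↑t ⊆ s ∧ (↑t : Set V).Pairwise (fun a b => ¬ G.Adj a b) ∧ t.card = n}

noncomputable def alpha {V : Type} (G : SimpleGraph V) : ℕ := indepNum G Set.univ

noncomputable def chiNat {V : Type} (G : SimpleGraph V) : ℕ := G.chromaticNumber.toNat

noncomputable def tw {V : Type} (G : SimpleGraph V) : ℕ :=
  sInf {w | ∃ D : TreeDecomp G, ∀ t, (D.bag t).card ≤ w + 1}

noncomputable def treeAlpha {V : Type} (G : SimpleGraph V) : ℕ :=
  sInf {k | ∃ D : TreeDecomp G, ∀ t, indepNum G ↑(D.bag t) ≤ k}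

noncomputable def treeChi {V : Type} (G : SimpleGraph V) : ℕ :=
  sInf {k | ∃ D : TreeDecomp G, ∀ t, chiNat (G.induce ↑(D.bag t)) ≤ k}

noncomputable def treeTw {V : Type} (G : SimpleGraph V) : ℕ :=
  sInf {k | ∃ D : TreeDecomp G, ∀ t, tw (G.induce ↑(D.bag t)) ≤ k}

noncomputable def omegaNum {V : Type} (G : SimpleGraph V) : ℕ :=
  sSup {n | ∃ t : Finset V, G.IsClique ↑t ∧ t.card = n}

def completion {V : Type} (H : SimpleGraph V) :
    SimpleGraph (V ⊕ {p : Sym2 V // ¬ p.IsDiag ∧ p ∉ H.edgeSet}) :=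
  SimpleGraph.fromRel (fun x y =>
    match x, y with
    | .inl u, .inl v => H.Adj u v
    | .inl u, .inr p => u ∈ p.1
    | _, _ => False)


section TreeLemmas
variable {ι : Type} {T : SimpleGraph ι}

section TreeLemmas

variable {ι : Type} {T : SimpleGraph ι}

noncomputable def pth (hT : T.IsTree) (a b : ι) : T.Walk a b :=
  (hT.existsUnique_path a b).choose

lemma pth_isPath (hT : T.IsTree) (a b : ι) : (pth hT a b).IsPath :=
  (hT.existsUnique_path a b).choose_spec.1

lemma pth_unique (hT : T.IsTree) {a b : ι} (q : T.Walk a b) (hq : q.IsPath) :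
    q = pth hT a b :=
  (hT.existsUnique_path a b).choose_spec.2 q hq

lemma path_self_eq_nil {a : ι} (p : T.Walk a a) (hp : p.IsPath) : p = SimpleGraph.Walk.nil := by
  cases p with
  | nil => rfl
  | cons h q =>
    exfalso
    rw [SimpleGraph.Walk.cons_isPath_iff] at hp
    exact hp.2 q.end_mem_support

/-- A set is path-closed: the support of any path between two of its members lies in it. -/
def PC (T : SimpleGraph ι) (S : Set ι) : Prop :=
  ∀ ⦃a b : ι⦄, a ∈ S → b ∈ S → ∀ p : T.Walk a b, p.IsPath → ∀ x ∈ p.support, x ∈ S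

lemma PC.inter {S₁ S₂ : Set ι} (h₁ : PC T S₁) (h₂ : PC T S₂) : PC T (S₁ ∩ S₂) :=
  fun _ _ ha hb p hp x hx => ⟨h₁ ha.1 hb.1 p hp x hx, h₂ ha.2 hb.2 p hp x hx⟩

lemma pc_of_induce_connected (hT : T.IsTree) {S : Set ι}
    (hS : (T.induce S).Connected) : PC T S := by
  classical
  intro a b ha hb p hp x hx
  obtain ⟨w⟩ := hS.preconnected ⟨a, ha⟩ ⟨b, hb⟩
  have hw : (w.map (SimpleGraph.Embedding.induce S).toHom : T.Walk a b).bypass.support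
      ⊆ (w.map (SimpleGraph.Embedding.induce S).toHom : T.Walk a b).support :=
    SimpleGraph.Walk.support_bypass_subset _
  have hpeq : p = (w.map (SimpleGraph.Embedding.induce S).toHom : T.Walk a b).bypass :=
    (hT.existsUnique_path a b).unique hp (SimpleGraph.Walk.bypass_isPath _)
  rw [hpeq] at hx
  have := hw hx
  rw [SimpleGraph.Walk.support_map] at this
  simp only [List.mem_map] at this
  obtain ⟨⟨y, hy⟩, _, rfl⟩ := this
  exact hy

lemma crossing {S : Set ι} : ∀ {a b : ι} (w : T.Walk a b), w.IsPath → a ∈ S → b ∉ S →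
    ∃ (x y : ι) (_ : T.Adj x y) (w₂ : T.Walk y b), x ∈ S ∧ y ∉ S ∧ x ∈ w.support ∧
      (∀ v ∈ w₂.support, v ∈ w.support) ∧ w₂.IsPath ∧ x ∉ w₂.support := by
  intro a b w
  induction w with
  | nil => intro _ ha hb; exact absurd ha hb
  | cons h q ih =>
    rename_i a c b
    intro hp ha hb
    by_cases hc : c ∈ S
    · obtain ⟨x, y, hxy, w₂, h1, h2, h3, h4, h5, h6⟩ :=
        ih (hp.of_cons) hc hb
      exact ⟨x, y, hxy, w₂, h1, h2, by simp [h3], fun v hv => by simp [h4 v hv], h5, h6⟩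
    · rw [SimpleGraph.Walk.cons_isPath_iff] at hp
      exact ⟨a, c, h, q, ha, hc, by simp, fun v hv => by simp [hv], hp.1, hp.2⟩

lemma firstHit {Q : Set ι} : ∀ {a b : ι} (w : T.Walk a b), w.IsPath → b ∈ Q →
    ∃ (m : ι) (w₁ : T.Walk a m), m ∈ Q ∧ w₁.IsPath ∧ (∀ v ∈ w₁.support, v ∈ w.support) ∧
      (∀ v ∈ w₁.support, v ∈ Q → v = m) := by
  intro a b w
  induction w with
  | nil =>
    rename_i u
    intro _ hb
    exact ⟨u, SimpleGraph.Walk.nil, hb, by simp, by simp, by simp⟩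
  | cons h q ih =>
    rename_i a c b
    intro hp hb
    by_cases ha : a ∈ Q
    · exact ⟨a, SimpleGraph.Walk.nil, ha, by simp, by simp, by simp⟩
    · obtain ⟨m, w₁, h1, h2, h3, h4⟩ := ih hp.of_cons hb
      refine ⟨m, SimpleGraph.Walk.cons h w₁, h1, ?_, ?_, ?_⟩
      · rw [SimpleGraph.Walk.cons_isPath_iff] at hp ⊢
        exact ⟨h2, fun hc => hp.2 (h3 a hc)⟩
      · intro v hv
        rw [SimpleGraph.Walk.support_cons] at hv ⊢
        rcases List.mem_cons.mp hv with rfl | hv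
        · simp
        · simp [h3 v hv]
      · intro v hv hvQ
        rw [SimpleGraph.Walk.support_cons] at hv
        rcases List.mem_cons.mp hv with rfl | hv
        · exact absurd hvQ ha
        · exact h4 v hv hvQ

lemma median (hT : T.IsTree) (x y z : ι) :
    ∃ m, m ∈ (pth hT x y).support ∧ m ∈ (pth hT z x).support ∧ m ∈ (pth hT z y).support := by
  classical
  obtain ⟨m, w₁, h1, h2, h3, h4⟩ := firstHit (Q := {v | v ∈ (pth hT x y).support})
    (pth hT z x) (pth_isPath hT z x) (by simp [SimpleGraph.Walk.start_mem_support])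
  have hm : m ∈ (pth hT x y).support := h1
  refine ⟨m, hm, h3 m w₁.end_mem_support, ?_⟩
  -- build the path z → m → y
  set w₂ := (pth hT x y).dropUntil m hm with hw₂
  have hw₂path : w₂.IsPath := (pth_isPath hT x y).dropUntil hm
  have hw₂sub : ∀ v ∈ w₂.support, v ∈ (pth hT x y).support :=
    fun v hv => SimpleGraph.Walk.support_dropUntil_subset _ hm hv
  have hW : (w₁.append w₂).IsPath := by
    rw [SimpleGraph.Walk.isPath_def, SimpleGraph.Walk.support_append]
    rw [List.nodup_append]
    refine ⟨h2.support_nodup, hw₂path.support_nodup.tail, ?_⟩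
    intro v hv1 u hv2 hvu
    subst hvu
    have hvQ : v ∈ (pth hT x y).support := hw₂sub v (List.mem_of_mem_tail hv2)
    rw [h4 v hv1 hvQ] at hv2
    have hmn : m ∉ w₂.support.tail := by
      have h5 := hw₂path.support_nodup
      rw [SimpleGraph.Walk.support_eq_cons] at h5
      exact (List.nodup_cons.mp h5).1
    exact hmn hv2
  have : w₁.append w₂ = pth hT z y := pth_unique hT _ hW
  rw [← this]
  rw [SimpleGraph.Walk.mem_support_append_iff]
  exact Or.inl w₁.end_mem_support

lemma helly3 (hT : T.IsTree) {A B C : Set ι} (hA : PC T A) (hB : PC T B) (hC : PC T C)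
    (hAB : (A ∩ B).Nonempty) (hBC : (B ∩ C).Nonempty) (hCA : (C ∩ A).Nonempty) :
    (A ∩ B ∩ C).Nonempty := by
  obtain ⟨x, hxA, hxB⟩ := hAB
  obtain ⟨y, hyB, hyC⟩ := hBC
  obtain ⟨z, hzC, hzA⟩ := hCA
  obtain ⟨m, h1, h2, h3⟩ := median hT x y z
  exact ⟨m, ⟨⟨hA hzA hxA _ (pth_isPath hT z x) m h2,
    hB hxB hyB _ (pth_isPath hT x y) m h1⟩,
    hC hzC hyC _ (pth_isPath hT z y) m h3⟩⟩

lemma helly_list {β : Type*} [DecidableEq β] (hT : T.IsTree) :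
    ∀ (l : List β) (f : β → Set ι), l ≠ [] → (∀ i ∈ l, PC T (f i)) →
    (∀ i ∈ l, ∀ j ∈ l, (f i ∩ f j).Nonempty) → ∃ m, ∀ i ∈ l, m ∈ f i := by
  intro l
  induction l with
  | nil => intro f h; exact absurd rfl h
  | cons a l ih =>
    intro f _ hpc hpair
    cases l with
    | nil =>
      obtain ⟨m, hm, _⟩ := hpair a (by simp) a (by simp)
      exact ⟨m, by simpa using hm⟩
    | cons b l' =>
      set f' := Function.update f b (f a ∩ f b) with hf'
      have hfb : f' b = f a ∩ f b := by simp [hf']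
      have hfne : ∀ i, i ≠ b → f' i = f i := fun i h => Function.update_of_ne h _ _
      have hsub : ∀ i, f' i ⊆ f i := by
        intro i
        by_cases hib : i = b
        · rw [hib, hfb]; exact Set.inter_subset_right
        · rw [hfne i hib]
      have hsubA : f' b ⊆ f a := by rw [hfb]; exact Set.inter_subset_left
      have hmem : ∀ k ∈ b :: l', k ∈ a :: b :: l' := fun k hk => List.mem_cons_of_mem a hk
      have key : ∀ j ∈ a :: b :: l', ((f a ∩ f b) ∩ f j).Nonempty := by
        intro j hj
        exact helly3 hT (hpc a (by simp)) (hpc b (by simp)) (hpc j hj)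
          (hpair a (by simp) b (by simp)) (hpair b (by simp) j hj) (hpair j hj a (by simp))
      have hpc' : ∀ i ∈ b :: l', PC T (f' i) := by
        intro i hi
        by_cases hib : i = b
        · rw [hib, hfb]; exact PC.inter (hpc a (by simp)) (hpc b (by simp))
        · rw [hfne i hib]; exact hpc i (hmem i hi)
      have hpair' : ∀ i ∈ b :: l', ∀ j ∈ b :: l', (f' i ∩ f' j).Nonempty := by
        intro i hi j hj
        by_cases hib : i = b <;> by_cases hjb : j = b
        · rw [hib, hjb]
          obtain ⟨m, hm⟩ := hpair a (by simp) b (by simp)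
          exact ⟨m, by rw [hfb]; exact ⟨hm, hm⟩⟩
        · rw [hib, hfb, hfne j hjb]
          exact key j (hmem j hj)
        · rw [hjb, hfb, hfne i hib]
          obtain ⟨m, hm1, hm2⟩ := key i (hmem i hi)
          exact ⟨m, hm2, hm1⟩
        · rw [hfne i hib, hfne j hjb]
          exact hpair i (hmem i hi) j (hmem j hj)
      obtain ⟨m, hm⟩ := ih f' (by simp) hpc' hpair'
      refine ⟨m, ?_⟩
      intro i hi
      rcases List.mem_cons.mp hi with rfl | hi
      · exact hsubA (hm b (by simp))
      · exact hsub i (hm i hi)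

/-- The side of `x` with respect to the tree edge `x ~ y`. -/
def sideX (hT : T.IsTree) (x y : ι) : Set ι := {z | x ∈ (pth hT z y).support}

lemma x_mem_sideX (hT : T.IsTree) (x y : ι) : x ∈ sideX hT x y :=
  (pth hT x y).start_mem_support

lemma y_not_mem_sideX (hT : T.IsTree) {x y : ι} (hxy : x ≠ y) : y ∉ sideX hT x y := by
  have : (SimpleGraph.Walk.nil : T.Walk y y) = pth hT y y :=
    pth_unique hT _ (by simp)
  simp only [sideX, Set.mem_setOf_eq, ← this, SimpleGraph.Walk.support_nil]
  simp [hxy]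

lemma cross_edge (hT : T.IsTree) {x y z w : ι} (e : T.Adj x y)
    (hz : z ∈ sideX hT x y) (hw : w ∉ sideX hT x y) (hzw : T.Adj z w) :
    z = x ∧ w = y := by
  classical
  have hzx : z = x := by
    have hbp : (SimpleGraph.Walk.cons hzw (pth hT w y)).bypass = pth hT z y :=
      pth_unique hT _ (SimpleGraph.Walk.bypass_isPath _)
    have hx : x ∈ (SimpleGraph.Walk.cons hzw (pth hT w y)).bypass.support := by
      rw [hbp]; exact hz
    have := SimpleGraph.Walk.support_bypass_subset _ hx
    rw [SimpleGraph.Walk.support_cons] at this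
    rcases List.mem_cons.mp this with h | h
    · exact h.symm
    · exact absurd h hw
  refine ⟨hzx, ?_⟩
  by_contra hwy
  have hzw' : T.Adj x w := hzx ▸ hzw
  have hxw : x ∉ (pth hT w y).support := hw
  have hpath : (SimpleGraph.Walk.cons hzw' (pth hT w y)).IsPath := by
    rw [SimpleGraph.Walk.cons_isPath_iff]
    exact ⟨pth_isPath hT w y, hxw⟩
  have h1 : SimpleGraph.Walk.cons hzw' (pth hT w y) = pth hT x y := pth_unique hT _ hpath
  have h2 : SimpleGraph.Walk.cons e (SimpleGraph.Walk.nil) = pth hT x y :=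
    pth_unique hT _ (by simp [e.ne])
  have := congrArg SimpleGraph.Walk.support (h1.trans h2.symm)
  rw [SimpleGraph.Walk.support_cons, SimpleGraph.Walk.support_cons,
    SimpleGraph.Walk.support_nil] at this
  have : (pth hT w y).support = [y] := by injection this
  have hws : w ∈ (pth hT w y).support := SimpleGraph.Walk.start_mem_support _
  rw [this] at hws
  exact hwy (by simpa using hws)

lemma pc_subset_sideX (hT : T.IsTree) {x y : ι} (e : T.Adj x y) {S : Set ι} (hS : PC T S)
    (hx : x ∈ S) (hy : y ∉ S) : S ⊆ sideX hT x y := by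
  intro z hzS
  by_contra hz
  obtain ⟨x', y', hxy', w₂, h1, h2, h3, h4, _, _⟩ :=
    crossing (S := sideX hT x y) (pth hT x z) (pth_isPath hT x z) (x_mem_sideX hT x y) hz
  obtain ⟨h5, h6⟩ := cross_edge hT e h1 h2 hxy'
  have hy'mem : y' ∈ (pth hT x z).support := h4 y' w₂.start_mem_support
  exact hy (h6 ▸ hS hx hzS _ (pth_isPath hT x z) y' hy'mem)

lemma pc_disjoint_sideX (hT : T.IsTree) {x y : ι} (e : T.Adj x y) {S : Set ι} (hS : PC T S)
    (hb : ∃ b ∈ S, b ∉ sideX hT x y) (hxS : x ∉ S) : ∀ z ∈ S, z ∉ sideX hT x y := by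
  obtain ⟨b, hbS, hbx⟩ := hb
  intro z hzS hz
  obtain ⟨x', y', hxy', w₂, h1, h2, h3, h4, _, _⟩ :=
    crossing (S := sideX hT x y) (pth hT z b) (pth_isPath hT z b) hz hbx
  obtain ⟨h5, h6⟩ := cross_edge hT e h1 h2 hxy'
  exact hxS (h5 ▸ hS hzS hbS _ (pth_isPath hT z b) x' h3)

end TreeLemmas

section Sep
variable {V : Type} {G : SimpleGraph V} (D : TreeDecomp G)

lemma supp_pc (v : V) : PC D.tree {t | v ∈ D.bag t} :=
  pc_of_induce_connected D.isTree (D.support_connected v)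

lemma mem_bag_of_cross {x y : D.ι} (e : D.tree.Adj x y) {v : V}
    (h1 : ∃ t ∈ sideX D.isTree x y, v ∈ D.bag t)
    (h2 : ∃ t, t ∉ sideX D.isTree x y ∧ v ∈ D.bag t) :
    v ∈ D.bag x ∧ v ∈ D.bag y := by
  obtain ⟨t₁, ht₁, hv₁⟩ := h1
  obtain ⟨t₂, ht₂, hv₂⟩ := h2
  obtain ⟨x', y', hxy', w₂, hx'1, hy'1, hx'2, h4, _, _⟩ :=
    crossing (S := sideX D.isTree x y) (pth D.isTree t₁ t₂) (pth_isPath D.isTree t₁ t₂) ht₁ ht₂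
  obtain ⟨h5, h6⟩ := cross_edge D.isTree e hx'1 hy'1 hxy'
  have hx'S : x' ∈ {t | v ∈ D.bag t} :=
    supp_pc D v hv₁ hv₂ _ (pth_isPath D.isTree t₁ t₂) x' hx'2
  have hy'S : y' ∈ {t | v ∈ D.bag t} :=
    supp_pc D v hv₁ hv₂ _ (pth_isPath D.isTree t₁ t₂) y' (h4 y' w₂.start_mem_support)
  exact ⟨h5 ▸ hx'S, h6 ▸ hy'S⟩

lemma separator {x y : D.ι} (e : D.tree.Adj x y) :
    ∀ {p q : V} (w : G.Walk p q), ¬ (∃ t, t ∉ sideX D.isTree x y ∧ p ∈ D.bag t) →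
    (∃ t, t ∉ sideX D.isTree x y ∧ q ∈ D.bag t) →
    ∃ s ∈ w.support, s ∈ D.bag x ∧ s ∈ D.bag y := by
  intro p q w
  induction w with
  | nil => intro hp hq; exact absurd hq hp
  | cons h w' ih =>
    rename_i p r q
    intro hp hq
    obtain ⟨t₀, hpt₀, hrt₀⟩ := D.covers_edge h
    have ht₀ : t₀ ∈ sideX D.isTree x y := by
      by_contra hc
      exact hp ⟨t₀, hc, hpt₀⟩
    by_cases hr : ∃ t, t ∉ sideX D.isTree x y ∧ r ∈ D.bag t
    · obtain ⟨h1, h2⟩ := mem_bag_of_cross D e ⟨t₀, ht₀, hrt₀⟩ hr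
      exact ⟨r, by simp, h1, h2⟩
    · obtain ⟨s, hs1, hs2⟩ := ih hr hq
      exact ⟨s, by simp [hs1], hs2⟩

end Sep

section Basic
variable {n : ℕ}

abbrev PT (n : ℕ) := {p : Sym2 (Fin n) // ¬ p.IsDiag ∧ p ∉ (⊥ : SimpleGraph (Fin n)).edgeSet}
abbrev VT (n : ℕ) := Fin n ⊕ PT n
abbrev GG (n : ℕ) : SimpleGraph (VT n) := completion (⊥ : SimpleGraph (Fin n))

@[simp] lemma adj_inl_inl {u v : Fin n} : ¬ (GG n).Adj (Sum.inl u) (Sum.inl v) := by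
  simp [GG, completion, fromRel_adj]

@[simp] lemma adj_inl_inr {u : Fin n} {p : PT n} :
    (GG n).Adj (Sum.inl u) (Sum.inr p) ↔ u ∈ p.1 := by
  simp [GG, completion, fromRel_adj]

@[simp] lemma adj_inr_inl {u : Fin n} {p : PT n} :
    (GG n).Adj (Sum.inr p) (Sum.inl u) ↔ u ∈ p.1 := by
  simp [GG, completion, fromRel_adj]

@[simp] lemma adj_inr_inr {p q : PT n} : ¬ (GG n).Adj (Sum.inr p) (Sum.inr q) := by
  simp [GG, completion, fromRel_adj]

noncomputable instance : Fintype (VT n) := by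
  classical
  exact Fintype.ofFinite _

lemma le_indepNum {s : Set (VT n)} (t : Finset (VT n)) (ht : ↑t ⊆ s)
    (hind : (↑t : Set (VT n)).Pairwise (fun a b => ¬ (GG n).Adj a b)) :
    t.card ≤ indepNum (GG n) s := by
  apply le_csSup
  · refine ⟨Fintype.card (VT n), ?_⟩
    rintro m ⟨u, _, _, rfl⟩
    exact Finset.card_le_univ u
  · exact ⟨t, ht, hind, rfl⟩

lemma indepNum_le {s : Set (VT n)} (k : ℕ)
    (h : ∀ t : Finset (VT n), ↑t ⊆ s →
      (↑t : Set (VT n)).Pairwise (fun a b => ¬ (GG n).Adj a b) → t.card ≤ k) :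
    indepNum (GG n) s ≤ k := by
  apply csSup_le
  · exact ⟨0, ∅, by simp⟩
  · rintro m ⟨u, h1, h2, rfl⟩
    exact h u h1 h2

end Basic


section LowerBound
variable {n : ℕ}

def mkP (u v : Fin n) (h : u ≠ v) : PT n :=
  ⟨s(u, v), by simp [Sym2.mk_isDiag_iff, h], by simp⟩

lemma mem_mkP {u v w : Fin n} {h : u ≠ v} : w ∈ (mkP u v h).1 ↔ w = u ∨ w = v := by
  simp [mkP, Sym2.mem_iff]

lemma sym2_eq_of_two {q : Sym2 (Fin n)} {a b : Fin n} (ha : a ∈ q) (hb : b ∈ q)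
    (hab : a ≠ b) : ∀ z ∈ q, z = a ∨ z = b := by
  induction q with
  | _ x y =>
    intro z hz
    rw [Sym2.mem_iff] at ha hb hz
    rcases ha with rfl | rfl <;> rcases hb with rfl | rfl <;> rcases hz with rfl | rfl <;> tauto


def Rprop (u v w : Fin n) (s : VT n) : Prop :=
  s = Sum.inl w ∨ ∃ q : PT n, s = Sum.inr q ∧ w ∈ q.1 ∧
    ((u ∈ q.1 ∧ v ∉ q.1) ∨ (v ∈ q.1 ∧ u ∉ q.1))

lemma Rprop_inj {u v w w' : Fin n} {s : VT n} (hwu : w ≠ u) (hwv : w ≠ v)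
    (hw'u : w' ≠ u) (hw'v : w' ≠ v) (h : Rprop u v w s) (h' : Rprop u v w' s) : w = w' := by
  rcases h with rfl | ⟨q, rfl, hwq, hc⟩
  · rcases h' with heq | ⟨q, heq, _⟩
    · exact (Sum.inl.injEq _ _ ▸ heq).symm ▸ rfl
    · simp at heq
  · rcases h' with heq | ⟨q', heq, hw'q, hc'⟩
    · simp at heq
    · rw [Sum.inr.injEq] at heq
      subst heq
      rcases hc with ⟨hu1, hv1⟩ | ⟨hv1, hu1⟩ <;> rcases hc' with ⟨hu2, hv2⟩ | ⟨hv2, hu2⟩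
      · rcases sym2_eq_of_two hu1 hwq (Ne.symm hwu) w' hw'q with h | h
        · exact absurd h hw'u
        · exact h.symm
      · exact absurd hu1 hu2
      · exact absurd hv1 hv2
      · rcases sym2_eq_of_two hv1 hwq (Ne.symm hwv) w' hw'q with h | h
        · exact absurd h hw'v
        · exact h.symm

lemma Rprop_not_mem {u v w z : Fin n} {q : PT n} (hwu : w ≠ u) (hwv : w ≠ v)
    (h : Rprop u v w (Sum.inr q)) (hzw : z ≠ w) (hzu : z ≠ u) (hzv : z ≠ v) : z ∉ q.1 := by
  rcases h with heq | ⟨q', heq, hwq, hc⟩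
  · simp at heq
  · rw [Sum.inr.injEq] at heq
    subst heq
    intro hz
    rcases hc with ⟨hu1, _⟩ | ⟨hv1, _⟩
    · rcases sym2_eq_of_two hu1 hwq (Ne.symm hwu) z hz with h | h
      · exact hzu h
      · exact hzw h
    · rcases sym2_eq_of_two hv1 hwq (Ne.symm hwv) z hz with h | h
      · exact hzv h
      · exact hzw h

lemma Rprop_not_adj {u v w w' : Fin n} {s s' : VT n} (hwu : w ≠ u) (hwv : w ≠ v)
    (hw'u : w' ≠ u) (hw'v : w' ≠ v) (hww' : w ≠ w')
    (h : Rprop u v w s) (h' : Rprop u v w' s') : ¬ (GG n).Adj s s' := by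
  have key : ∀ (a b : Fin n) (qa : PT n), a ≠ u → a ≠ v → b ≠ u → b ≠ v → a ≠ b →
      Rprop u v b (Sum.inr qa) → ¬ (GG n).Adj (Sum.inl a) (Sum.inr qa) := by
    intro a b qa hau hav hbu hbv hab hR
    rw [adj_inl_inr]
    exact Rprop_not_mem hbu hbv hR hab hau hav
  rcases h with rfl | ⟨q, rfl, hwq, hc⟩ <;> rcases h' with rfl | ⟨q', rfl, hw'q, hc'⟩
  · exact adj_inl_inl
  · exact key w w' q' hwu hwv hw'u hw'v hww' (Or.inr ⟨q', rfl, hw'q, hc'⟩)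
  · intro hadj
    exact key w' w q hw'u hw'v hwu hwv (Ne.symm hww') (Or.inr ⟨q, rfl, hwq, hc⟩) hadj.symm
  · exact adj_inr_inr

lemma Rprop_uv_cases {u v w : Fin n} {s : VT n} (huv : u ≠ v) (hwu : w ≠ u) (hwv : w ≠ v)
    (h : Rprop u v w s) :
    s ≠ Sum.inr (mkP u v huv) ∧ ¬ (GG n).Adj s (Sum.inr (mkP u v huv)) := by
  constructor
  · intro heq
    rw [heq] at h
    rcases h with heq' | ⟨q, heq', hwq, hc⟩
    · simp at heq'
    · rw [Sum.inr.injEq] at heq'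
      subst heq'
      rcases hc with ⟨_, hv1⟩ | ⟨_, hu1⟩
      · exact hv1 (mem_mkP.mpr (Or.inr rfl))
      · exact hu1 (mem_mkP.mpr (Or.inl rfl))
  · rcases h with rfl | ⟨q, rfl, _, _⟩
    · rw [adj_inl_inr, mem_mkP]
      rintro (rfl | rfl)
      · exact hwu rfl
      · exact hwv rfl
    · exact adj_inr_inr


lemma lower_bound (hn : 2 ≤ n) (D : TreeDecomp (GG n)) :
    ∃ x : D.ι, ∃ I : Finset (VT n), ↑I ⊆ ((D.bag x : Finset (VT n)) : Set (VT n)) ∧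
      (↑I : Set (VT n)).Pairwise (fun a b => ¬ (GG n).Adj a b) ∧ n - 1 ≤ I.card := by
  classical
  set Tu : Fin n → Set D.ι := fun u => {t | Sum.inl u ∈ D.bag t} with hTu
  have hTu_pc : ∀ u, PC D.tree (Tu u) := fun u => supp_pc D (Sum.inl u)
  have hTu_ne : ∀ u : Fin n, (Tu u).Nonempty := by
    intro u
    by_cases hu : u = (⟨0, by omega⟩ : Fin n)
    · have hne : u ≠ (⟨1, by omega⟩ : Fin n) := by
        subst hu
        intro h
        have := congrArg Fin.val h
        simp at this
      obtain ⟨t, ht, _⟩ := D.covers_edge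
        (u := Sum.inl u) (v := Sum.inr (mkP u _ hne)) (by simp [mem_mkP])
      exact ⟨t, ht⟩
    · obtain ⟨t, ht, _⟩ := D.covers_edge
        (u := Sum.inl u) (v := Sum.inr (mkP u (⟨0, by omega⟩ : Fin n) hu)) (by simp [mem_mkP])
      exact ⟨t, ht⟩
  by_cases hall : ∀ u v : Fin n, (Tu u ∩ Tu v).Nonempty
  · obtain ⟨m, hm⟩ := helly_list D.isTree (List.finRange n) Tu
      (by
        intro h
        have := congrArg List.length h
        simp at this
        omega)
      (fun i _ => hTu_pc i) (fun i _ j _ => hall i j)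
    refine ⟨m, Finset.univ.image (Sum.inl : Fin n → VT n), ?_, ?_, ?_⟩
    · intro s hs
      simp only [Finset.coe_image, Finset.coe_univ, Set.image_univ, Set.mem_range] at hs
      obtain ⟨j, rfl⟩ := hs
      exact hm j (List.mem_finRange j)
    · intro s hs s' hs' hne
      simp only [Finset.coe_image, Finset.coe_univ, Set.image_univ, Set.mem_range] at hs hs'
      obtain ⟨j, rfl⟩ := hs
      obtain ⟨j', rfl⟩ := hs'
      exact adj_inl_inl
    · rw [Finset.card_image_of_injective _ Sum.inl_injective, Finset.card_univ, Fintype.card_fin]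
      omega
  · push_neg at hall
    obtain ⟨u, v, huv0⟩ := hall
    have hdisj : ∀ t, ¬ (t ∈ Tu u ∧ t ∈ Tu v) := by
      intro t ht
      exact Set.eq_empty_iff_forall_notMem.mp huv0 t ⟨ht.1, ht.2⟩
    have huv : u ≠ v := by
      rintro rfl
      obtain ⟨t, ht⟩ := hTu_ne u
      exact hdisj t ⟨ht, ht⟩
    obtain ⟨a, ha⟩ := hTu_ne u
    obtain ⟨b, hb⟩ := hTu_ne v
    have hbu : b ∉ Tu u := fun hc => hdisj b ⟨hc, hb⟩
    obtain ⟨x, y, e, w₂, hxS, hyS, hxsup, hsub, hw₂p, hxw₂⟩ :=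
      crossing (S := Tu u) (pth D.isTree a b) (pth_isPath D.isTree a b) ha hbu
    have hbside : b ∉ sideX D.isTree x y := by
      have hrev : w₂.reverse = pth D.isTree b y := pth_unique D.isTree _ hw₂p.reverse
      intro hc
      have hc' : x ∈ (pth D.isTree b y).support := hc
      rw [← hrev, SimpleGraph.Walk.support_reverse] at hc'
      exact hxw₂ (List.mem_reverse.mp hc')
    have hTuside : Tu u ⊆ sideX D.isTree x y := pc_subset_sideX D.isTree e (hTu_pc u) hxS hyS
    have hxTv : x ∉ Tu v := fun hc => hdisj x ⟨hxS, hc⟩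
    have hTvside : ∀ z ∈ Tu v, z ∉ sideX D.isTree x y :=
      pc_disjoint_sideX D.isTree e (hTu_pc v) ⟨b, hb, hbside⟩ hxTv
    have hu_not : ¬ ∃ t, t ∉ sideX D.isTree x y ∧ Sum.inl u ∈ D.bag t := by
      rintro ⟨t, ht1, ht2⟩
      exact ht1 (hTuside ht2)
    have hv_yes : ∃ t, t ∉ sideX D.isTree x y ∧ Sum.inl v ∈ D.bag t := ⟨b, hbside, hb⟩
    have hynotside : y ∉ sideX D.isTree x y := y_not_mem_sideX D.isTree e.ne
    have hxside : x ∈ sideX D.isTree x y := x_mem_sideX D.isTree x y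
    have hv_notx : Sum.inl v ∉ D.bag x := fun hc => hTvside x hc hxside
    have hu_noty : Sum.inl u ∉ D.bag y := fun hc => hu_not ⟨y, hynotside, hc⟩
    have hex : ∀ w : Fin n, w ≠ u → w ≠ v → ∃ s, s ∈ D.bag x ∧ Rprop u v w s := by
      intro w hwu hwv
      have h1 : (GG n).Adj (Sum.inl u) (Sum.inr (mkP u w (Ne.symm hwu))) := by
        rw [adj_inl_inr]; exact mem_mkP.mpr (Or.inl rfl)
      have h2 : (GG n).Adj (Sum.inr (mkP u w (Ne.symm hwu))) (Sum.inl w) := by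
        rw [adj_inr_inl]; exact mem_mkP.mpr (Or.inr rfl)
      have h3 : (GG n).Adj (Sum.inl w) (Sum.inr (mkP w v hwv)) := by
        rw [adj_inl_inr]; exact mem_mkP.mpr (Or.inl rfl)
      have h4 : (GG n).Adj (Sum.inr (mkP w v hwv)) (Sum.inl v) := by
        rw [adj_inr_inl]; exact mem_mkP.mpr (Or.inr rfl)
      obtain ⟨s, hs, hsx, hsy⟩ := separator D e
        (SimpleGraph.Walk.cons h1 (SimpleGraph.Walk.cons h2
          (SimpleGraph.Walk.cons h3 (SimpleGraph.Walk.cons h4 SimpleGraph.Walk.nil))))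
        hu_not hv_yes
      simp only [SimpleGraph.Walk.support_cons, SimpleGraph.Walk.support_nil,
        List.mem_cons, List.not_mem_nil, or_false] at hs
      rcases hs with rfl | rfl | rfl | rfl | rfl
      · exact absurd hsy hu_noty
      · refine ⟨_, hsx, Or.inr ⟨_, rfl, mem_mkP.mpr (Or.inr rfl), Or.inl
          ⟨mem_mkP.mpr (Or.inl rfl), ?_⟩⟩⟩
        rw [mem_mkP]
        rintro (rfl | rfl)
        · exact huv rfl
        · exact hwv rfl
      · exact ⟨_, hsx, Or.inl rfl⟩
      · refine ⟨_, hsx, Or.inr ⟨_, rfl, mem_mkP.mpr (Or.inl rfl), Or.inr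
          ⟨mem_mkP.mpr (Or.inr rfl), ?_⟩⟩⟩
        rw [mem_mkP]
        rintro (rfl | rfl)
        · exact hwu rfl
        · exact huv rfl
      · exact absurd hsx hv_notx
    have hs₀ : Sum.inr (mkP u v huv) ∈ D.bag x := by
      have h1 : (GG n).Adj (Sum.inl u) (Sum.inr (mkP u v huv)) := by
        rw [adj_inl_inr]; exact mem_mkP.mpr (Or.inl rfl)
      have h2 : (GG n).Adj (Sum.inr (mkP u v huv)) (Sum.inl v) := by
        rw [adj_inr_inl]; exact mem_mkP.mpr (Or.inr rfl)
      obtain ⟨s, hs, hsx, hsy⟩ := separator D e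
        (SimpleGraph.Walk.cons h1 (SimpleGraph.Walk.cons h2 SimpleGraph.Walk.nil))
        hu_not hv_yes
      simp only [SimpleGraph.Walk.support_cons, SimpleGraph.Walk.support_nil,
        List.mem_cons, List.not_mem_nil, or_false] at hs
      rcases hs with rfl | rfl | rfl
      · exact absurd hsy hu_noty
      · exact hsx
      · exact absurd hsx hv_notx
    set f : Fin n → VT n := fun w =>
      if h : w ≠ u ∧ w ≠ v then (hex w h.1 h.2).choose else Sum.inl w with hf
    have hfspec : ∀ w : Fin n, w ≠ u → w ≠ v → f w ∈ D.bag x ∧ Rprop u v w (f w) := by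
      intro w h1 h2
      have : f w = (hex w h1 h2).choose := by rw [hf]; simp only [dif_pos (And.intro h1 h2)]
      rw [this]
      exact (hex w h1 h2).choose_spec
    set A : Finset (Fin n) := (Finset.univ.erase v).erase u with hAdef
    have hA : ∀ w ∈ A, w ≠ u ∧ w ≠ v := by
      intro w hw
      rw [hAdef, Finset.mem_erase, Finset.mem_erase] at hw
      exact ⟨hw.1, hw.2.1⟩
    have hAcard : A.card = n - 2 := by
      rw [hAdef, Finset.card_erase_of_mem (Finset.mem_erase.mpr ⟨huv, Finset.mem_univ u⟩),
        Finset.card_erase_of_mem (Finset.mem_univ v), Finset.card_univ, Fintype.card_fin]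
      omega
    have hinj : Set.InjOn f ↑A := by
      intro w hw w' hw' heq
      obtain ⟨h1, h2⟩ := hA w hw
      obtain ⟨h3, h4⟩ := hA w' hw'
      exact Rprop_inj h1 h2 h3 h4 (hfspec w h1 h2).2 (heq ▸ (hfspec w' h3 h4).2)
    have hs₀notin : Sum.inr (mkP u v huv) ∉ A.image f := by
      intro hc
      rw [Finset.mem_image] at hc
      obtain ⟨w, hwA, hfw⟩ := hc
      obtain ⟨h1, h2⟩ := hA w hwA
      exact (Rprop_uv_cases huv h1 h2 (hfspec w h1 h2).2).1 hfw
    refine ⟨x, insert (Sum.inr (mkP u v huv)) (A.image f), ?_, ?_, ?_⟩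
    · intro s hs
      simp only [Finset.coe_insert, Set.mem_insert_iff, Finset.coe_image, Set.mem_image,
        Finset.mem_coe] at hs
      rcases hs with rfl | ⟨w, hwA, rfl⟩
      · exact hs₀
      · obtain ⟨h1, h2⟩ := hA w hwA
        exact (hfspec w h1 h2).1
    · intro s hs s' hs' hne
      simp only [Finset.coe_insert, Set.mem_insert_iff, Finset.coe_image, Set.mem_image,
        Finset.mem_coe] at hs hs'
      rcases hs with rfl | ⟨w, hwA, rfl⟩ <;> rcases hs' with rfl | ⟨w', hw'A, rfl⟩
      · exact absurd rfl hne
      · obtain ⟨h1, h2⟩ := hA w' hw'A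
        intro hadj
        exact (Rprop_uv_cases huv h1 h2 (hfspec w' h1 h2).2).2 hadj.symm
      · obtain ⟨h1, h2⟩ := hA w hwA
        exact (Rprop_uv_cases huv h1 h2 (hfspec w h1 h2).2).2
      · obtain ⟨h1, h2⟩ := hA w hwA
        obtain ⟨h3, h4⟩ := hA w' hw'A
        have hww' : w ≠ w' := fun h => hne (by rw [h])
        exact Rprop_not_adj h1 h2 h3 h4 hww' (hfspec w h1 h2).2 (hfspec w' h3 h4).2
    · rw [Finset.card_insert_of_notMem hs₀notin, Finset.card_image_of_injOn hinj, hAcard]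
      omega

end LowerBound


section DoubleStar
variable {L : Type}

def DS (side : L → Bool) : SimpleGraph (Bool ⊕ L) :=
  SimpleGraph.fromRel (fun s t =>
    (s = Sum.inl false ∧ t = Sum.inl true) ∨ (∃ p, s = Sum.inr p ∧ t = Sum.inl (side p)))

variable {side : L → Bool}

@[simp] lemma DS_adj_ll {a b : Bool} : (DS side).Adj (Sum.inl a) (Sum.inl b) ↔ a ≠ b := by
  constructor
  · rintro ⟨hne, _⟩ rfl; exact hne rfl
  · intro h
    refine ⟨by simpa using h, ?_⟩
    match a, b with
    | false, true => exact Or.inl (Or.inl ⟨rfl, rfl⟩)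
    | true, false => exact Or.inr (Or.inl ⟨rfl, rfl⟩)
    | false, false => exact absurd rfl h
    | true, true => exact absurd rfl h

@[simp] lemma DS_adj_lr {a : Bool} {p : L} :
    (DS side).Adj (Sum.inl a) (Sum.inr p) ↔ side p = a := by
  constructor
  · rintro ⟨hne, h | h⟩
    · rcases h with ⟨_, h⟩ | ⟨q, h, _⟩ <;> simp_all
    · rcases h with ⟨h, _⟩ | ⟨q, hq, h⟩
      · simp_all
      · rw [Sum.inr.injEq] at hq
        subst hq
        rw [Sum.inl.injEq] at h
        exact h.symm
  · intro h
    exact ⟨by simp, Or.inr (Or.inr ⟨p, rfl, by rw [h]⟩)⟩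

@[simp] lemma DS_adj_rl {a : Bool} {p : L} :
    (DS side).Adj (Sum.inr p) (Sum.inl a) ↔ side p = a := by
  rw [adj_comm, DS_adj_lr]

@[simp] lemma DS_adj_rr {p q : L} : ¬ (DS side).Adj (Sum.inr p) (Sum.inr q) := by
  rintro ⟨hne, h | h⟩ <;> rcases h with ⟨_, h⟩ | ⟨r, _, h⟩ <;> simp_all

end DoubleStar

section DS2
variable {L : Type} {side : L → Bool}

lemma edge_into_leaf_aux {p : L} : ∀ {z t : Bool ⊕ L} (q : (DS side).Walk z t),
    t = Sum.inr p → ¬ q.Nil → s(Sum.inl (side p), Sum.inr p) ∈ q.edges := by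
  intro z t q
  induction q with
  | nil => intro _ h; exact absurd SimpleGraph.Walk.nil_nil h
  | cons h' q' ih =>
    intro ht _
    cases q' with
    | nil =>
      subst ht
      rename_i z _
      cases z with
      | inl a =>
        have ha : side p = a := by
          have h2 := h'
          rwa [DS_adj_lr] at h2
        subst ha
        simp
      | inr r => exact absurd h' DS_adj_rr
    | cons h'' q'' =>
      have := ih ht (by simp)
      rw [SimpleGraph.Walk.edges_cons]
      exact List.mem_cons_of_mem _ this

lemma edge_into_leaf {p : L} {z : Bool ⊕ L} (q : (DS side).Walk z (Sum.inr p)) (h : ¬ q.Nil) :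
    s(Sum.inl (side p), Sum.inr p) ∈ q.edges :=
  edge_into_leaf_aux q rfl h

lemma leaf_not_in_cycle {v : Bool ⊕ L} {c : (DS side).Walk v v} (hc : c.IsCycle) (p : L) :
    Sum.inr p ∉ c.support := by
  classical
  intro hp
  have hc' : (c.rotate _ hp).IsCycle := hc.rotate hp
  obtain ⟨z, h, q, hq⟩ := SimpleGraph.Walk.not_nil_iff.mp hc'.not_nil
  cases z with
  | inr r => exact absurd h DS_adj_rr
  | inl a =>
    have ha : side p = a := by rwa [DS_adj_rl] at h
    subst ha
    have hqnil : ¬ q.Nil := SimpleGraph.Walk.not_nil_of_ne (by simp)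
    have he : s(Sum.inl (side p), Sum.inr p) ∈ q.edges := edge_into_leaf q hqnil
    have htrail : (c.rotate _ hp).IsTrail := hc'.isCircuit.isTrail
    rw [hq] at htrail
    have hnodup := htrail.edges_nodup
    rw [SimpleGraph.Walk.edges_cons] at hnodup
    rw [List.nodup_cons] at hnodup
    rw [Sym2.eq_swap] at he
    exact hnodup.1 he

lemma DS_isAcyclic : (DS side).IsAcyclic := by
  intro v c hc
  have hleaf : ∀ p : L, Sum.inr p ∉ c.support := fun p => leaf_not_in_cycle hc p
  have hlen : 3 ≤ c.length := hc.three_le_length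
  have hnodup : c.support.tail.Nodup := hc.support_nodup
  have hall : ∀ x ∈ c.support.tail, ∃ a, x = Sum.inl a := by
    intro x hx
    cases x with
    | inl a => exact ⟨a, rfl⟩
    | inr r => exact absurd (List.mem_of_mem_tail hx) (hleaf r)
  set g : Bool ⊕ L → Bool := fun x => match x with | .inl a => a | .inr _ => false with hg
  have hmapnodup : (c.support.tail.map g).Nodup := by
    apply hnodup.map_on
    intro x hx y hy hxy
    obtain ⟨a, rfl⟩ := hall x hx
    obtain ⟨b, rfl⟩ := hall y hy
    simpa [hg] using hxy
  have hlen2 : (c.support.tail.map g).length ≤ 2 := by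
    have := hmapnodup.length_le_card
    simpa using this
  rw [List.length_map, List.length_tail, SimpleGraph.Walk.length_support] at hlen2
  omega

lemma DS_reach_true : ∀ x : Bool ⊕ L, (DS side).Reachable x (Sum.inl true) := by
  intro x
  have hbool : ∀ a : Bool, (DS side).Reachable (Sum.inl a) (Sum.inl true) := by
    intro a
    cases a with
    | true => exact SimpleGraph.Reachable.refl _
    | false => exact SimpleGraph.Adj.reachable (by simp)
  cases x with
  | inl a => exact hbool a
  | inr p =>
    exact (SimpleGraph.Adj.reachable (by simp : (DS side).Adj (Sum.inr p) (Sum.inl (side p)))).trans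
      (hbool (side p))

lemma DS_isTree : (DS side).IsTree := by
  constructor
  · constructor
    · intro x y
      exact (DS_reach_true x).trans (DS_reach_true y).symm
  · exact DS_isAcyclic

end DS2


section Sym2Helpers
variable {n : ℕ}

lemma sym2_inf_mem (p : Sym2 (Fin n)) : p.inf ∈ p := by
  induction p with
  | _ a b =>
    rcases le_total a b with h | h
    · rw [Sym2.inf_mk, inf_eq_left.mpr h]; exact Sym2.mem_mk_left a b
    · rw [Sym2.inf_mk, inf_eq_right.mpr h]; exact Sym2.mem_mk_right a b

lemma sym2_sup_mem (p : Sym2 (Fin n)) : p.sup ∈ p := by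
  induction p with
  | _ a b =>
    rcases le_total a b with h | h
    · rw [Sym2.sup_mk, sup_eq_right.mpr h]; exact Sym2.mem_mk_right a b
    · rw [Sym2.sup_mk, sup_eq_left.mpr h]; exact Sym2.mem_mk_left a b

lemma sym2_mem_inf_sup {p : Sym2 (Fin n)} {z : Fin n} (h : z ∈ p) : z = p.inf ∨ z = p.sup := by
  induction p with
  | _ a b =>
    rw [Sym2.mem_iff] at h
    rcases le_total a b with h' | h' <;> rw [Sym2.inf_mk, Sym2.sup_mk] <;>
      [rw [inf_eq_left.mpr h', sup_eq_right.mpr h']; rw [inf_eq_right.mpr h', sup_eq_left.mpr h']] <;>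
      tauto

lemma sym2_inf_lt_sup {p : Sym2 (Fin n)} (h : ¬ p.IsDiag) : p.inf < p.sup := by
  induction p with
  | _ a b =>
    rw [Sym2.mk_isDiag_iff] at h
    rcases lt_or_gt_of_ne h with h' | h'
    · rw [Sym2.inf_mk, Sym2.sup_mk, inf_eq_left.mpr h'.le, sup_eq_right.mpr h'.le]; exact h'
    · rw [Sym2.inf_mk, Sym2.sup_mk, inf_eq_right.mpr h'.le, sup_eq_left.mpr h'.le]; exact h'

lemma sym2_eq_mk_inf_sup (p : Sym2 (Fin n)) : p = s(p.inf, p.sup) := by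
  induction p with
  | _ a b =>
    rcases le_total a b with h' | h'
    · rw [Sym2.inf_mk, Sym2.sup_mk, inf_eq_left.mpr h', sup_eq_right.mpr h']
    · rw [Sym2.inf_mk, Sym2.sup_mk, inf_eq_right.mpr h', sup_eq_left.mpr h', Sym2.eq_swap]

end Sym2Helpers

lemma connected_hub {ιT : Type} {T : SimpleGraph ιT} {S : Set ιT} (hub : ιT) (hhub : hub ∈ S)
    (h : ∀ a ∈ S, a = hub ∨ T.Adj a hub ∨ ∃ c ∈ S, T.Adj a c ∧ T.Adj c hub) :
    (T.induce S).Connected := by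
  rw [SimpleGraph.connected_iff]
  refine ⟨?_, ⟨⟨hub, hhub⟩⟩⟩
  have hreach : ∀ a : S, (T.induce S).Reachable a ⟨hub, hhub⟩ := by
    rintro ⟨a, ha⟩
    rcases h a ha with rfl | hadj | ⟨c, hc, h1, h2⟩
    · rfl
    · exact SimpleGraph.Adj.reachable hadj
    · exact (SimpleGraph.Adj.reachable (by exact h1 : (T.induce S).Adj ⟨a, ha⟩ ⟨c, hc⟩)).trans
        (SimpleGraph.Adj.reachable (by exact h2 : (T.induce S).Adj ⟨c, hc⟩ ⟨hub, hhub⟩))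
  intro x y
  exact (hreach x).trans (hreach y).symm

section UpperBound
variable {n : ℕ}

def v0 (hn : 2 ≤ n) : Fin n := ⟨0, by omega⟩
def v1 (hn : 2 ≤ n) : Fin n := ⟨1, by omega⟩

lemma v0_ne_v1 (hn : 2 ≤ n) : v0 hn ≠ v1 hn := by
  intro h
  have := congrArg Fin.val h
  simp [v0, v1] at this

def e01 (hn : 2 ≤ n) : PT n := mkP (v0 hn) (v1 hn) (v0_ne_v1 hn)

lemma mem_e01 {hn : 2 ≤ n} {w : Fin n} : w ∈ (e01 hn).1 ↔ w = v0 hn ∨ w = v1 hn := by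
  rw [e01]; exact mem_mkP

def sd (hn : 2 ≤ n) : PT n → Bool := fun p => decide (v0 hn ∈ p.1)

lemma sd_iff {hn : 2 ≤ n} {p : PT n} : sd hn p = true ↔ v0 hn ∈ p.1 := by
  simp [sd]

noncomputable def bagF (hn : 2 ≤ n) : Bool ⊕ PT n → Finset (VT n)
  | .inl false => ((Finset.univ.erase (v0 hn)).image Sum.inl) ∪ {Sum.inr (e01 hn)}
  | .inl true => ((Finset.univ.erase (v1 hn)).image Sum.inl) ∪ {Sum.inr (e01 hn)}
  | .inr p => if p = e01 hn then {Sum.inr (e01 hn)}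
      else ({Sum.inl p.1.inf} ∪ (Finset.Ici p.1.sup).image Sum.inl) ∪ {Sum.inr p}

lemma mem_bag_if {hn : 2 ≤ n} {j : Fin n} {b : Bool} :
    Sum.inl j ∈ bagF hn (Sum.inl b) ↔ j ≠ (if b then v1 hn else v0 hn) := by
  cases b <;> simp [bagF] <;> tauto

lemma mem_bag_inl_false {hn : 2 ≤ n} {j : Fin n} :
    Sum.inl j ∈ bagF hn (Sum.inl false) ↔ j ≠ v0 hn := by
  simpa using mem_bag_if (hn := hn) (j := j) (b := false)

lemma mem_bag_inl_true {hn : 2 ≤ n} {j : Fin n} :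
    Sum.inl j ∈ bagF hn (Sum.inl true) ↔ j ≠ v1 hn := by
  simpa using mem_bag_if (hn := hn) (j := j) (b := true)

lemma mem_bag_inr_center {hn : 2 ≤ n} {p : PT n} {b : Bool} :
    Sum.inr p ∈ bagF hn (Sum.inl b) ↔ p = e01 hn := by
  cases b <;> simp [bagF]

lemma mem_bag_leaf_inl {hn : 2 ≤ n} {j : Fin n} {p : PT n} :
    Sum.inl j ∈ bagF hn (Sum.inr p) ↔ p ≠ e01 hn ∧ (j = p.1.inf ∨ p.1.sup ≤ j) := by
  by_cases hp : p = e01 hn <;> simp [bagF, hp]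

lemma mem_bag_leaf_inr {hn : 2 ≤ n} {q p : PT n} :
    Sum.inr q ∈ bagF hn (Sum.inr p) ↔ q = p := by
  by_cases hp : p = e01 hn
  · subst hp; simp [bagF, eq_comm]
  · simp [bagF, hp]

lemma sup_ge_two {hn : 2 ≤ n} {p : PT n} (hp : p ≠ e01 hn) : 2 ≤ (p.1.sup : ℕ) := by
  have hlt := sym2_inf_lt_sup p.2.1
  by_contra hle
  push_neg at hle
  have h1 : (p.1.inf : ℕ) < (p.1.sup : ℕ) := hlt
  have hinf : (p.1.inf : ℕ) = 0 := by omega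
  have hsup : (p.1.sup : ℕ) = 1 := by omega
  apply hp
  apply Subtype.ext
  rw [sym2_eq_mk_inf_sup p.1]
  have hieq : p.1.inf = v0 hn := by apply Fin.ext; simpa [v0] using hinf
  have hseq : p.1.sup = v1 hn := by apply Fin.ext; simpa [v1] using hsup
  rw [hieq, hseq]
  rfl


lemma covers (hn : 2 ≤ n) : ∀ ⦃s t : VT n⦄, (GG n).Adj s t →
    ∃ x : Bool ⊕ PT n, s ∈ bagF hn x ∧ t ∈ bagF hn x := by
  have key : ∀ (w : Fin n) (p : PT n), w ∈ p.1 →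
      ∃ x : Bool ⊕ PT n, Sum.inl w ∈ bagF hn x ∧ Sum.inr p ∈ bagF hn x := by
    intro w p hw
    by_cases hp : p = e01 hn
    · subst hp
      rcases mem_e01.mp hw with rfl | rfl
      · exact ⟨Sum.inl true, mem_bag_inl_true.mpr (v0_ne_v1 hn),
          mem_bag_inr_center.mpr rfl⟩
      · exact ⟨Sum.inl false, mem_bag_inl_false.mpr (Ne.symm (v0_ne_v1 hn)),
          mem_bag_inr_center.mpr rfl⟩
    · refine ⟨Sum.inr p, mem_bag_leaf_inl.mpr ⟨hp, ?_⟩, mem_bag_leaf_inr.mpr rfl⟩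
      rcases sym2_mem_inf_sup hw with h | h
      · exact Or.inl h
      · exact Or.inr (le_of_eq h.symm)
  intro s t hadj
  match s, t with
  | Sum.inl u, Sum.inl v => exact absurd hadj adj_inl_inl
  | Sum.inl u, Sum.inr p =>
    exact key u p (adj_inl_inr.mp hadj)
  | Sum.inr p, Sum.inl u =>
    obtain ⟨x, h1, h2⟩ := key u p (adj_inr_inl.mp hadj)
    exact ⟨x, h2, h1⟩
  | Sum.inr p, Sum.inr q => exact absurd hadj adj_inr_inr

lemma supp_conn (hn : 2 ≤ n) : ∀ v : VT n,
    ((DS (sd hn)).induce {t | v ∈ bagF hn t}).Connected := by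
  intro v
  match v with
  | Sum.inr q =>
    by_cases hq : q = e01 hn
    · subst hq
      apply connected_hub (Sum.inl true) (show Sum.inr (e01 hn) ∈ bagF hn (Sum.inl true) from mem_bag_inr_center.mpr rfl)
      intro a ha
      match a with
      | Sum.inl true => exact Or.inl rfl
      | Sum.inl false => exact Or.inr (Or.inl (DS_adj_ll.mpr (by simp)))
      | Sum.inr p =>
        have hp : e01 hn = p := mem_bag_leaf_inr.mp ha
        subst hp
        refine Or.inr (Or.inl (DS_adj_rl.mpr ?_))
        rw [sd_iff]
        exact mem_e01.mpr (Or.inl rfl)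
    · refine connected_hub (T := DS (sd hn)) (S := {t | Sum.inr q ∈ bagF hn t})
        (Sum.inr q) (mem_bag_leaf_inr.mpr rfl) ?_
      intro a ha
      match a with
      | Sum.inl b => exact absurd (mem_bag_inr_center.mp ha) hq
      | Sum.inr p =>
        have hp : q = p := mem_bag_leaf_inr.mp ha
        subst hp
        exact Or.inl rfl
  | Sum.inl j =>
    by_cases hj0 : j = v0 hn
    · subst hj0
      apply connected_hub (Sum.inl true) (mem_bag_inl_true.mpr (v0_ne_v1 hn))
      intro a ha
      match a with
      | Sum.inl true => exact Or.inl rfl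
      | Sum.inl false => exact absurd rfl (mem_bag_inl_false.mp ha)
      | Sum.inr p =>
        obtain ⟨hp, hcase⟩ := mem_bag_leaf_inl.mp ha
        refine Or.inr (Or.inl (DS_adj_rl.mpr ?_))
        rw [sd_iff]
        rcases hcase with h | h
        · rw [h]; exact sym2_inf_mem p.1
        · exfalso
          have h2 : (p.1.sup : ℕ) ≤ 0 := h
          have := sup_ge_two (hn := hn) hp
          omega
    · by_cases hj1 : j = v1 hn
      · subst hj1
        apply connected_hub (Sum.inl false) (mem_bag_inl_false.mpr (Ne.symm (v0_ne_v1 hn)))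
        intro a ha
        match a with
        | Sum.inl false => exact Or.inl rfl
        | Sum.inl true => exact absurd rfl (mem_bag_inl_true.mp ha)
        | Sum.inr p =>
          obtain ⟨hp, hcase⟩ := mem_bag_leaf_inl.mp ha
          have hv1inf : v1 hn = p.1.inf := by
            rcases hcase with h | h
            · exact h
            · exfalso
              have h2 : (p.1.sup : ℕ) ≤ 1 := h
              have := sup_ge_two (hn := hn) hp
              omega
          refine Or.inr (Or.inl (DS_adj_rl.mpr ?_))
          have hv0 : v0 hn ∉ p.1 := by
            intro hc
            rcases sym2_mem_inf_sup hc with h | h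
            · rw [← hv1inf] at h
              exact v0_ne_v1 hn h
            · have h2 := sup_ge_two (hn := hn) hp
              have : (v0 hn : ℕ) = 0 := rfl
              rw [h] at this
              omega
          simp [sd, hv0]
      · apply connected_hub (Sum.inl false) (mem_bag_inl_false.mpr hj0)
        intro a ha
        match a with
        | Sum.inl false => exact Or.inl rfl
        | Sum.inl true => exact Or.inr (Or.inl (DS_adj_ll.mpr (by simp)))
        | Sum.inr p =>
          cases hsd : sd hn p with
          | false => exact Or.inr (Or.inl (DS_adj_rl.mpr hsd))
          | true =>
            refine Or.inr (Or.inr ⟨Sum.inl true, mem_bag_inl_true.mpr hj1, ?_, ?_⟩)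
            · exact DS_adj_rl.mpr hsd
            · exact DS_adj_ll.mpr (by simp)

noncomputable def DD (hn : 2 ≤ n) : TreeDecomp (GG n) where
  ι := Bool ⊕ PT n
  tree := DS (sd hn)
  isTree := DS_isTree
  bag := bagF hn
  covers_edge := covers hn
  support_connected := supp_conn hn


lemma indep_le_card_sub_one {I B : Finset (VT n)} {a b : VT n}
    (hIB : ↑I ⊆ (↑B : Set (VT n)))
    (hpair : (↑I : Set (VT n)).Pairwise (fun a b => ¬ (GG n).Adj a b))
    (hadj : (GG n).Adj a b) (haB : a ∈ B) (hbB : b ∈ B) : I.card ≤ B.card - 1 := by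
  have hIB' : ∀ s ∈ I, s ∈ B := fun s hs => hIB hs
  by_cases haI : a ∈ I
  · have hbI : b ∉ I := fun hbI =>
      hpair (Finset.mem_coe.mpr haI) (Finset.mem_coe.mpr hbI) hadj.ne hadj
    have hsub : I ⊆ B.erase b :=
      fun s hs => Finset.mem_erase.mpr ⟨fun h => hbI (h ▸ hs), hIB' s hs⟩
    calc I.card ≤ (B.erase b).card := Finset.card_le_card hsub
      _ = B.card - 1 := Finset.card_erase_of_mem hbB
  · have hsub : I ⊆ B.erase a :=
      fun s hs => Finset.mem_erase.mpr ⟨fun h => haI (h ▸ hs), hIB' s hs⟩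
    calc I.card ≤ (B.erase a).card := Finset.card_le_card hsub
      _ = B.card - 1 := Finset.card_erase_of_mem haB

lemma card_center_bag (hn : 2 ≤ n) (b : Bool) : (bagF hn (Sum.inl b)).card = n := by
  have hco : ∀ v : Fin n, (((Finset.univ.erase v).image (Sum.inl : Fin n → VT n)) ∪
      {Sum.inr (e01 hn)}).card = n := by
    intro v
    rw [Finset.card_union_of_disjoint (by simp), Finset.card_image_of_injective _
      Sum.inl_injective, Finset.card_erase_of_mem (Finset.mem_univ _), Finset.card_univ,
      Fintype.card_fin, Finset.card_singleton]
    omega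
  cases b
  · show (((Finset.univ.erase (v0 hn)).image Sum.inl) ∪ {Sum.inr (e01 hn)}).card = n
    exact hco _
  · show (((Finset.univ.erase (v1 hn)).image Sum.inl) ∪ {Sum.inr (e01 hn)}).card = n
    exact hco _

lemma bag_bound (hn : 2 ≤ n) (t : Bool ⊕ PT n) :
    indepNum (GG n) ↑(bagF hn t) ≤ n - 1 := by
  apply indepNum_le
  intro I hIB hpair
  match t with
  | Sum.inl false =>
    have h := indep_le_card_sub_one hIB hpair
      (a := Sum.inl (v1 hn)) (b := Sum.inr (e01 hn))
      (adj_inl_inr.mpr (mem_e01.mpr (Or.inr rfl)))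
      (mem_bag_inl_false.mpr (Ne.symm (v0_ne_v1 hn)))
      (mem_bag_inr_center.mpr rfl)
    rwa [card_center_bag hn false] at h
  | Sum.inl true =>
    have h := indep_le_card_sub_one hIB hpair
      (a := Sum.inl (v0 hn)) (b := Sum.inr (e01 hn))
      (adj_inl_inr.mpr (mem_e01.mpr (Or.inl rfl)))
      (mem_bag_inl_true.mpr (v0_ne_v1 hn))
      (mem_bag_inr_center.mpr rfl)
    rwa [card_center_bag hn true] at h
  | Sum.inr p =>
    by_cases hp : p = e01 hn
    · subst hp
      have hB : bagF hn (Sum.inr (e01 hn)) = {Sum.inr (e01 hn)} := by simp [bagF]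
      have : I ⊆ {Sum.inr (e01 hn)} := by
        intro s hs
        have := hIB hs
        rwa [hB] at this
      have := Finset.card_le_card this
      rw [Finset.card_singleton] at this
      omega
    · have hsup2 : 2 ≤ (p.1.sup : ℕ) := sup_ge_two hp
      have hsuplt : (p.1.sup : ℕ) < n := p.1.sup.isLt
      have hBdef : bagF hn (Sum.inr p) =
          ({Sum.inl p.1.inf} ∪ (Finset.Ici p.1.sup).image Sum.inl) ∪ {Sum.inr p} := by
        simp [bagF, hp]
      have hcard : (bagF hn (Sum.inr p)).card = 1 + (n - (p.1.sup : ℕ)) + 1 := by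
        rw [hBdef]
        rw [Finset.card_union_of_disjoint, Finset.card_union_of_disjoint]
        · rw [Finset.card_singleton, Finset.card_singleton,
            Finset.card_image_of_injective _ Sum.inl_injective, Fin.card_Ici]
        · rw [Finset.disjoint_singleton_left, Finset.mem_image]
          rintro ⟨j, hj, hjeq⟩
          rw [Finset.mem_Ici] at hj
          have : j = p.1.inf := by
            have := Sum.inl_injective hjeq
            exact this
          rw [this] at hj
          exact absurd (lt_of_le_of_lt hj (sym2_inf_lt_sup p.2.1)) (lt_irrefl _)
        · rw [Finset.disjoint_singleton_right]
          simp
      have h := indep_le_card_sub_one hIB hpair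
        (a := Sum.inl p.1.inf) (b := Sum.inr p)
        (adj_inl_inr.mpr (sym2_inf_mem p.1))
        (mem_bag_leaf_inl.mpr ⟨hp, Or.inl rfl⟩)
        (mem_bag_leaf_inr.mpr rfl)
      rw [hcard] at h
      omega

end UpperBound

theorem stmt8 (n : ℕ) (hn : 2 ≤ n) :
    treeAlpha (completion (⊥ : SimpleGraph (Fin n))) = n - 1 := by
  have hmem : (n - 1) ∈ {k | ∃ D : TreeDecomp (GG n), ∀ t, indepNum (GG n) ↑(D.bag t) ≤ k} :=
    ⟨DD hn, fun t => bag_bound hn t⟩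
  unfold treeAlpha
  apply le_antisymm
  · exact Nat.sInf_le hmem
  · apply le_csInf ⟨_, hmem⟩
    rintro k ⟨D, hD⟩
    obtain ⟨x, I, hsub, hpair, hcard⟩ := lower_bound hn D
    calc n - 1 ≤ I.card := hcard
      _ ≤ indepNum (GG n) ↑(D.bag x) := le_indepNum I hsub hpair
      _ ≤ k := hD x
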